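/- arXiv:math/0106019 — 7 statements merged into one kernel-verified Lean document; each statement's English description precedes it below -/
import Mathlib

section
/- Let E be a group and H a subgroup contained in the center of E, and consider the quotient (E×E)/H with composition ⟦(a,b)⟧ ∘ ⟦(c,d)⟧ := ⟦(a, d·(c⁻¹·b))⟧ (defined when c⁻¹·b ∈ H) and tensor product ⟦(e₁,e₂)⟧ ⊗ ⟦(e₃,e₄)⟧ := ⟦(e₁e₃, e₂e₄)⟧. Then the interchange law holds: for e₁,e₂,e₃,e₄,f₁,f₂,f₃,f₄ ∈ E with f₁⁻¹·e₂ ∈ H and f₃⁻¹·e₄ ∈ H, one has (f₁f₃)⁻¹·(e₂e₄) ∈ H and (⟦(e₁,e₂)⟧ ⊗ ⟦(e₃,e₄)⟧) ∘ (⟦(f₁,f₂)⟧ ⊗ ⟦(f₃,f₄)⟧) = (⟦(e₁,e₂)⟧ ∘ ⟦(f₁,f₂)⟧) ⊗ (⟦(e₃,e₄)⟧ ∘ ⟦(f₃,f₄)⟧). -/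
/-- The equivalence relation on `E × E` given by the diagonal right action of the
central subgroup `H`: `(e₁, e₂) ~ (e₁ h, e₂ h)` for `h ∈ H`. -/
def twistedSetoid {E : Type*} [Group E] (H : Subgroup E) : Setoid (E × E) where
  r p q := ∃ h ∈ H, q.1 = p.1 * h ∧ q.2 = p.2 * h
  iseqv := by
    constructor
    · intro p; exact ⟨1, H.one_mem, by simp, by simp⟩
    · rintro p q ⟨h, hh, h1, h2⟩
      exact ⟨h⁻¹, H.inv_mem hh, by rw [h1]; group, by rw [h2]; group⟩
    · rintro p q r ⟨h, hh, h1, h2⟩ ⟨k, hk, k1, k2⟩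
      exact ⟨h * k, H.mul_mem hh hk, by rw [k1, h1, mul_assoc],
        by rw [k2, h2, mul_assoc]⟩

/-- `⟦(e₁, e₂)⟧ : (E × E)/H`, the class of `(e₁,e₂)` in the quotient. -/
def tmk {E : Type*} [Group E] (H : Subgroup E) (p : E × E) :
    Quotient (twistedSetoid H) :=
  Quotient.mk (twistedSetoid H) p

/-- On representatives, the composite `⟦(a,b)⟧ ∘ ⟦(c,d)⟧ := ⟦(a, d·(c⁻¹·b))⟧`. -/
def tcomp {E : Type*} [Group E] (p q : E × E) : E × E :=
  (p.1, q.2 * (q.1⁻¹ * p.2))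

/-- On representatives, the tensor product `⟦(e₁,e₂)⟧ ⊗ ⟦(e₃,e₄)⟧ := ⟦(e₁e₃, e₂e₄)⟧`. -/
def ttensor {E : Type*} [Group E] (p q : E × E) : E × E :=
  (p.1 * q.1, p.2 * q.2)

/-- The interchange law between composition and tensor product on `(E × E)/H`,
for `H` a central subgroup of `E`: if `f₁⁻¹·e₂ ∈ H` and `f₃⁻¹·e₄ ∈ H` then
`(f₁f₃)⁻¹·(e₂e₄) ∈ H` and
`(⟦(e₁,e₂)⟧ ⊗ ⟦(e₃,e₄)⟧) ∘ (⟦(f₁,f₂)⟧ ⊗ ⟦(f₃,f₄)⟧)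
  = (⟦(e₁,e₂)⟧ ∘ ⟦(f₁,f₂)⟧) ⊗ (⟦(e₃,e₄)⟧ ∘ ⟦(f₃,f₄)⟧)`. -/
theorem twisted_interchange {E : Type*} [Group E] (H : Subgroup E)
    (hcentral : H ≤ Subgroup.center E)
    (e₁ e₂ e₃ e₄ f₁ f₂ f₃ f₄ : E)
    (h12 : f₁⁻¹ * e₂ ∈ H) (h34 : f₃⁻¹ * e₄ ∈ H) :
    (f₁ * f₃)⁻¹ * (e₂ * e₄) ∈ H ∧
      tmk H (tcomp (ttensor (e₁, e₂) (e₃, e₄)) (ttensor (f₁, f₂) (f₃, f₄))) =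
        tmk H (ttensor (tcomp (e₁, e₂) (f₁, f₂)) (tcomp (e₃, e₄) (f₃, f₄))) := by
  have ha := Subgroup.mem_center_iff.mp (hcentral h12)
  have key : (f₁ * f₃)⁻¹ * (e₂ * e₄) = (f₁⁻¹ * e₂) * (f₃⁻¹ * e₄) := by
    rw [mul_inv_rev]
    calc f₃⁻¹ * f₁⁻¹ * (e₂ * e₄) = f₃⁻¹ * (f₁⁻¹ * e₂) * e₄ := by group
    _ = (f₁⁻¹ * e₂) * f₃⁻¹ * e₄ := by rw [ha f₃⁻¹]
    _ = _ := by group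
  refine ⟨key ▸ H.mul_mem h12 h34, ?_⟩
  have : tcomp (ttensor (e₁, e₂) (e₃, e₄)) (ttensor (f₁, f₂) (f₃, f₄)) =
      ttensor (tcomp (e₁, e₂) (f₁, f₂)) (tcomp (e₃, e₄) (f₃, f₄)) := by
    simp only [tcomp, ttensor, Prod.mk.injEq]
    refine ⟨trivial, ?_⟩
    rw [key]
    calc f₂ * f₄ * ((f₁⁻¹ * e₂) * (f₃⁻¹ * e₄))
        = f₂ * (f₄ * (f₁⁻¹ * e₂)) * (f₃⁻¹ * e₄) := by group
      _ = f₂ * ((f₁⁻¹ * e₂) * f₄) * (f₃⁻¹ * e₄) := by rw [ha f₄]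
      _ = f₂ * (f₁⁻¹ * e₂) * (f₄ * (f₃⁻¹ * e₄)) := by group
  rw [this]
end

section
/- Let E be a group and H a subgroup contained in the center of E. Let ι be an index type, e : ι → ι → E with e j i = (e i j)⁻¹, f : ι → E, and η : ι → ι → E with η i j ∈ H for all i,j. Define e' i j := (f i)⁻¹·(e i j)·(f j)·(η i j), and set h i j k := (e i j)·(e j k)·(e k i), h' i j k := (e' i j)·(e' j k)·(e' k i). If h i j k ∈ H for all i,j,k, then for all i,j,k: h' i j k = (h i j k)·(η i j)·(η j k)·(η k i). -/
/-- Transformation rule of the Čech 2-cochain `h i j k = (e i j)(e j k)(e k i)`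
under an equivalence of twisted bundles: if `e' i j = (f i)⁻¹·(e i j)·(f j)·(η i j)`
with `η` valued in the central subgroup `H` and `h` valued in `H`, then
`h' i j k = (h i j k)·(η i j)·(η j k)·(η k i)`. -/
theorem twisted_cochain_transformation {E : Type*} [Group E] (H : Subgroup E)
    (hcentral : H ≤ Subgroup.center E)
    {ι : Type*} (e : ι → ι → E) (f : ι → E) (η : ι → ι → E)
    (hsym : ∀ i j, e j i = (e i j)⁻¹)
    (hη : ∀ i j, η i j ∈ H)
    (hH : ∀ i j k, e i j * e j k * e k i ∈ H) :
    ∀ i j k,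
      ((f i)⁻¹ * e i j * f j * η i j) * ((f j)⁻¹ * e j k * f k * η j k) *
          ((f k)⁻¹ * e k i * f i * η k i) =
        (e i j * e j k * e k i) * η i j * η j k * η k i := by
  have aux : ∀ a b c x y z : E, (∀ g, g * a = a * g) → (∀ g, g * b = b * g) →
      (x * a) * (y * b) * (z * c) = x * y * z * a * b * c := by
    intro a b c x y z ha hb
    have move : ∀ (w : E), (∀ g : E, g * w = w * g) → ∀ u v : E, u * w * v = u * v * w := by
      intro w hw u v; rw [mul_assoc, ← hw v, ← mul_assoc]
    calc (x * a) * (y * b) * (z * c)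
        = x * a * y * b * z * c := by group
      _ = x * y * a * b * z * c := by rw [mul_assoc x a y, ← ha y, ← mul_assoc]
      _ = x * y * a * z * b * c := by rw [move b hb (x * y * a) z]
      _ = x * y * z * a * b * c := by rw [move a ha (x * y) z]
  intro i j k
  have cij := Subgroup.mem_center_iff.mp (hcentral (hη i j))
  have cjk := Subgroup.mem_center_iff.mp (hcentral (hη j k))
  have ch := Subgroup.mem_center_iff.mp (hcentral (hH i j k))
  calc ((f i)⁻¹ * e i j * f j * η i j) * ((f j)⁻¹ * e j k * f k * η j k) *
          ((f k)⁻¹ * e k i * f i * η k i)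
      = ((f i)⁻¹ * e i j * f j) * ((f j)⁻¹ * e j k * f k) *
          ((f k)⁻¹ * e k i * f i) * η i j * η j k * η k i :=
        aux _ _ _ _ _ _ cij cjk
    _ = (f i)⁻¹ * (e i j * e j k * e k i) * f i * η i j * η j k * η k i := by group
    _ = (e i j * e j k * e k i) * η i j * η j k * η k i := by
        rw [ch ((f i)⁻¹), mul_assoc _ (f i)⁻¹ (f i)]
        group
end

section
/- Let 𝔸 be a normed ring that is a normed algebra over ℝ. Fix a ∈ ℝ, and let g : ℝ → 𝔸, A : ℝ → 𝔸, u : ℝ → 𝔸ˣ (units of 𝔸), and u' : ℝ → 𝔸. Suppose that at a point t ∈ ℝ the function g has derivative g(t)·A(t) (i.e., HasDerivAt g (g t * A t) t) and the function s ↦ ↑(u s) has derivative u'(t) at t. Then the function s ↦ (↑(u a))⁻¹ · g(s) · ↑(u s) has derivative (↑(u a))⁻¹ · g(t) · ↑(u t) · ( (↑(u t))⁻¹·A(t)·↑(u t) + (↑(u t))⁻¹·u'(t) ) at t. (This is the transformation rule 𝒫exp∫(u⁻¹Au + u⁻¹du) = u(a)⁻¹ · 𝒫exp∫A · u(b) for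 path-ordered integrals, at the level of the defining linear ODE.) -/
/-- Transformation rule for path-ordered integrals at the level of the
defining linear ODE: if `g` solves `g' = g·A` at `t` and the (coerced) unit
curve `u` has derivative `u'` at `t`, then `s ↦ u(a)⁻¹·g(s)·u(s)` has
derivative `u(a)⁻¹·g(t)·u(t)·(u(t)⁻¹·A(t)·u(t) + u(t)⁻¹·u'(t))` at `t`.
This is `𝒫exp∫(u⁻¹Au + u⁻¹du) = u(a)⁻¹ · 𝒫exp∫A · u(b)`. -/
theorem pathOrderedExp_gauge_transformation
    {𝔸 : Type*} [NormedRing 𝔸] [NormedAlgebra ℝ 𝔸]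
    (a : ℝ) (g A : ℝ → 𝔸) (u : ℝ → 𝔸ˣ) (u' : ℝ → 𝔸) (t : ℝ)
    (hg : HasDerivAt g (g t * A t) t)
    (hu : HasDerivAt (fun s => ((u s : 𝔸))) (u' t) t) :
    HasDerivAt (fun s => (((u a)⁻¹ : 𝔸ˣ) : 𝔸) * g s * ((u s : 𝔸)))
      ((((u a)⁻¹ : 𝔸ˣ) : 𝔸) * g t * ((u t : 𝔸)) *
        ((((u t)⁻¹ : 𝔸ˣ) : 𝔸) * A t * ((u t : 𝔸)) +
          (((u t)⁻¹ : 𝔸ˣ) : 𝔸) * u' t)) t := by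
  have h := (hg.const_mul (((u a)⁻¹ : 𝔸ˣ) : 𝔸)).mul hu
  convert h using 1
  · rfl
  have h1 : ((u t : 𝔸)) * (((u t)⁻¹ : 𝔸ˣ) : 𝔸) = 1 := Units.mul_inv _
  rw [mul_add]
  congr 1
  · calc (((u a)⁻¹ : 𝔸ˣ) : 𝔸) * g t * ↑(u t) * ((((u t)⁻¹ : 𝔸ˣ) : 𝔸) * A t * ↑(u t))
        = (((u a)⁻¹ : 𝔸ˣ) : 𝔸) * g t * (↑(u t) * (((u t)⁻¹ : 𝔸ˣ) : 𝔸)) * A t * ↑(u t) := by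
          noncomm_ring
      _ = (((u a)⁻¹ : 𝔸ˣ) : 𝔸) * (g t * A t) * ↑(u t) := by rw [h1]; noncomm_ring
  · calc (((u a)⁻¹ : 𝔸ˣ) : 𝔸) * g t * ↑(u t) * ((((u t)⁻¹ : 𝔸ˣ) : 𝔸) * u' t)
        = (((u a)⁻¹ : 𝔸ˣ) : 𝔸) * g t * (↑(u t) * (((u t)⁻¹ : 𝔸ˣ) : 𝔸)) * u' t := by noncomm_ring
      _ = (((u a)⁻¹ : 𝔸ˣ) : 𝔸) * g t * u' t := by rw [h1]; noncomm_ring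
end

section
/- Let 𝔸 be a normed ring and normed ℝ-algebra, and let a, b, c : ℝ → 𝔸ˣ with a', b', c' : ℝ → 𝔸 such that at every t the coercions of a, b, c have derivatives a'(t), b'(t), c'(t) respectively. Let Aᵢ, Aⱼ, Aₖ : ℝ → 𝔸, and define ωᵢⱼ(t) := Aⱼ(t) − (a t)⁻¹·Aᵢ(t)·(a t) − (a t)⁻¹·a'(t), ωⱼₖ(t) := Aₖ(t) − (b t)⁻¹·Aⱼ(t)·(b t) − (b t)⁻¹·b'(t), ωₖᵢ(t) := Aᵢ(t) − (c t)⁻¹·Aₖ(t)·(c t) − (c t)⁻¹·c'(t). Set h(t) := (a t)·(b t)·(c t) and h'(t) := a'(t)·(b t)·(c t) + (a t)·b'(t)·(c t) + (a t)·(b t)·c'(t). If for all t the elements ωᵢⱼ(t), ωⱼₖ(t), ωₖᵢ(t), h(t) and h'(t) all lie in the center of 𝔸, then for all t: ωᵢⱼ(t) + ωⱼₖ(t) + ωₖᵢ(t) = −(h t)⁻¹·h'(t). -/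
/-- The cocycle identity `A_ij + A_jk + A_ki = −h_ijk⁻¹ dh_ijk` for the
discrepancy 1-forms of a 0-connection in a twisted principal bundle, evaluated
along a path.  Here `a, b, c` play the role of the transition functions
`e_ij, e_jk, e_ki`, `Ai, Aj, Ak` the local connection forms, `ωij` etc. the
discrepancies `A_j − e_ij⁻¹ A_i e_ij − e_ij⁻¹ de_ij`, and `h = a·b·c` the
`H`-valued cocycle with derivative `h'` (Leibniz rule); the hypothesis is that
the `ω`'s, `h` and `h'` are central. -/
theorem twisted_connection_cocycle_identity
    {𝔸 : Type*} [NormedRing 𝔸] [NormedAlgebra ℝ 𝔸]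
    (a b c : ℝ → 𝔸ˣ) (a' b' c' : ℝ → 𝔸)
    (ha : ∀ t, HasDerivAt (fun s => ((a s : 𝔸))) (a' t) t)
    (hb : ∀ t, HasDerivAt (fun s => ((b s : 𝔸))) (b' t) t)
    (hc : ∀ t, HasDerivAt (fun s => ((c s : 𝔸))) (c' t) t)
    (Ai Aj Ak ωij ωjk ωki h' : ℝ → 𝔸)
    (hωij : ∀ t, ωij t =
      Aj t - (((a t)⁻¹ : 𝔸ˣ) : 𝔸) * Ai t * ((a t : 𝔸)) - (((a t)⁻¹ : 𝔸ˣ) : 𝔸) * a' t)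
    (hωjk : ∀ t, ωjk t =
      Ak t - (((b t)⁻¹ : 𝔸ˣ) : 𝔸) * Aj t * ((b t : 𝔸)) - (((b t)⁻¹ : 𝔸ˣ) : 𝔸) * b' t)
    (hωki : ∀ t, ωki t =
      Ai t - (((c t)⁻¹ : 𝔸ˣ) : 𝔸) * Ak t * ((c t : 𝔸)) - (((c t)⁻¹ : 𝔸ˣ) : 𝔸) * c' t)
    (hh' : ∀ t, h' t =
      a' t * ((b t : 𝔸)) * ((c t : 𝔸)) + ((a t : 𝔸)) * b' t * ((c t : 𝔸)) +
        ((a t : 𝔸)) * ((b t : 𝔸)) * c' t)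
    (hcen : ∀ t, ωij t ∈ Set.center 𝔸 ∧ ωjk t ∈ Set.center 𝔸 ∧
      ωki t ∈ Set.center 𝔸 ∧ (((a t * b t * c t : 𝔸ˣ) : 𝔸)) ∈ Set.center 𝔸 ∧
      h' t ∈ Set.center 𝔸) :
    ∀ t, ωij t + ωjk t + ωki t =
      -(((((a t * b t * c t)⁻¹ : 𝔸ˣ)) : 𝔸) * h' t) := by
  intro t
  obtain ⟨c1, c2, c3, c4, c5⟩ := hcen t
  have key1 : (a t : 𝔸) * ωij t = (a t : 𝔸) * Aj t - Ai t * (a t : 𝔸) - a' t := by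
    simp [hωij t, mul_sub, mul_assoc, Units.mul_inv_cancel_left]
  have key2 : (b t : 𝔸) * ωjk t = (b t : 𝔸) * Ak t - Aj t * (b t : 𝔸) - b' t := by
    simp [hωjk t, mul_sub, mul_assoc, Units.mul_inv_cancel_left]
  have key3 : (c t : 𝔸) * ωki t = (c t : 𝔸) * Ai t - Ak t * (c t : 𝔸) - c' t := by
    simp [hωki t, mul_sub, mul_assoc, Units.mul_inv_cancel_left]
  have hAi : ((a t : 𝔸) * (b t : 𝔸) * (c t : 𝔸)) * Ai t
      = Ai t * ((a t : 𝔸) * (b t : 𝔸) * (c t : 𝔸)) := by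
    simpa [Units.val_mul] using (c4.comm (Ai t)).eq
  apply (Units.mul_right_inj (a t * b t * c t)).mp
  have rhs : ((a t * b t * c t : 𝔸ˣ) : 𝔸) * -((((a t * b t * c t)⁻¹ : 𝔸ˣ) : 𝔸) * h' t)
      = -(h' t) := by
    rw [mul_neg, Units.mul_inv_cancel_left]
  rw [rhs]
  have t1 : (a t : 𝔸) * (b t : 𝔸) * (c t : 𝔸) * ωij t
      = ((a t : 𝔸) * ωij t) * ((b t : 𝔸) * (c t : 𝔸)) := by
    rw [mul_assoc ((a t : 𝔸) * (b t : 𝔸)) ((c t : 𝔸)) (ωij t),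
      (c1.comm ((c t : 𝔸))).symm,
      ← mul_assoc ((a t : 𝔸) * (b t : 𝔸)) (ωij t) ((c t : 𝔸)),
      mul_assoc ((a t : 𝔸)) ((b t : 𝔸)) (ωij t),
      (c1.comm ((b t : 𝔸))).symm,
      ← mul_assoc ((a t : 𝔸)) (ωij t) ((b t : 𝔸)),
      mul_assoc ((a t : 𝔸) * ωij t) ((b t : 𝔸)) ((c t : 𝔸))]
  have t2 : (a t : 𝔸) * (b t : 𝔸) * (c t : 𝔸) * ωjk t
      = (a t : 𝔸) * ((b t : 𝔸) * ωjk t) * (c t : 𝔸) := by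
    rw [mul_assoc ((a t : 𝔸) * (b t : 𝔸)) ((c t : 𝔸)) (ωjk t),
      (c2.comm ((c t : 𝔸))).symm,
      ← mul_assoc ((a t : 𝔸) * (b t : 𝔸)) (ωjk t) ((c t : 𝔸)),
      mul_assoc ((a t : 𝔸)) ((b t : 𝔸)) (ωjk t)]
  have t3 : (a t : 𝔸) * (b t : 𝔸) * (c t : 𝔸) * ωki t
      = ((a t : 𝔸) * (b t : 𝔸)) * ((c t : 𝔸) * ωki t) := by
    rw [mul_assoc]
  rw [Units.val_mul, Units.val_mul, mul_add, mul_add, t1, t2, t3, key1, key2, key3, hh' t]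
  rw [sub_mul, sub_mul, mul_sub, mul_sub, sub_mul, mul_sub, mul_sub]
  have expand : Ai t * (a t : 𝔸) * ((b t : 𝔸) * (c t : 𝔸))
      = (a t : 𝔸) * (b t : 𝔸) * (c t : 𝔸) * Ai t := by
    rw [hAi, mul_assoc, mul_assoc]
  rw [expand]
  noncomm_ring
end

section
/- Let 𝔸 be a normed ring and normed ℝ-algebra, a : ℝ → 𝔸ˣ with a' : ℝ → 𝔸 the derivative of its coercion at every point, and Aᵢ, Aⱼ : ℝ → 𝔸. Define ωᵢⱼ(t) := Aⱼ(t) − (a t)⁻¹·Aᵢ(t)·(a t) − (a t)⁻¹·a'(t), and define ωⱼᵢ(t) := Aᵢ(t) − (a t)·Aⱼ(t)·(a t)⁻¹ + a'(t)·(a t)⁻¹ (the analogous discrepancy for the inverse transition function a⁻¹, whose derivative is −(a t)⁻¹·a'(t)·(a t)⁻¹). If ωᵢⱼ(t) lies in the center of 𝔸 for all t, then ωⱼᵢ(t) = −ωᵢⱼ(t) for all t. -/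
/-- Antisymmetry `A_ji = −A_ij` of the discrepancy 1-form of a 0-connection in
a twisted principal bundle, evaluated along a path.  Here `a` plays the role of
the transition function `e_ij` (with the inverse transition function `a⁻¹`
having derivative `−a⁻¹ a' a⁻¹`), `Ai, Aj` the local connection forms, and
`ωij = A_j − e_ij⁻¹ A_i e_ij − e_ij⁻¹ de_ij` is assumed central. -/
theorem twisted_connection_antisymmetry
    {𝔸 : Type*} [NormedRing 𝔸] [NormedAlgebra ℝ 𝔸]
    (a : ℝ → 𝔸ˣ) (a' : ℝ → 𝔸)
    (ha : ∀ t, HasDerivAt (fun s => ((a s : 𝔸))) (a' t) t)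
    (Ai Aj ωij ωji : ℝ → 𝔸)
    (hωij : ∀ t, ωij t =
      Aj t - (((a t)⁻¹ : 𝔸ˣ) : 𝔸) * Ai t * ((a t : 𝔸)) - (((a t)⁻¹ : 𝔸ˣ) : 𝔸) * a' t)
    (hωji : ∀ t, ωji t =
      Ai t - ((a t : 𝔸)) * Aj t * (((a t)⁻¹ : 𝔸ˣ) : 𝔸) + a' t * (((a t)⁻¹ : 𝔸ˣ) : 𝔸))
    (hcen : ∀ t, ωij t ∈ Set.center 𝔸) :
    ∀ t, ωji t = -ωij t := by
  intro t
  have hcomm : (a t : 𝔸) * ωij t = ωij t * (a t : 𝔸) :=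
    ((Set.mem_center_iff.mp (hcen t)).comm _).symm
  have key : (a t : 𝔸) * ωij t * (((a t)⁻¹ : 𝔸ˣ) : 𝔸) = ωij t := by
    rw [hcomm, mul_assoc, Units.mul_inv, mul_one]
  have expand : (a t : 𝔸) * ωij t * (((a t)⁻¹ : 𝔸ˣ) : 𝔸) = -ωji t := by
    rw [hωij t, hωji t]
    noncomm_ring
    simp only [mul_assoc, Units.mul_inv_cancel_left, Units.inv_mul_cancel_left,
      Units.mul_inv, Units.inv_mul, mul_one, one_mul]
  rw [← key, expand, neg_neg]
end

section
/- Let 𝔸 be a normed ring and normed ℝ-algebra. Let e, f, g, η : ℝ → 𝔸ˣ with derivatives (of coercions) e', f', g', η' : ℝ → 𝔸 at every t, and let Aᵢ, Aⱼ, Bᵢ, Bⱼ : ℝ → 𝔸. Define ωᵢⱼ(t) := Aⱼ(t) − (e t)⁻¹·Aᵢ(t)·(e t) − (e t)⁻¹·e'(t). Define the gauge-transformed data: Ê(t) := (f t)⁻¹·(e t)·(g t)·(η t) with derivative Ê'(t) computed by the product and inverse rules, Âᵢ(t) := (f t)⁻¹·Aᵢ(t)·(f t) + (f t)⁻¹·f'(t)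 + Bᵢ(t), Âⱼ(t) := (g t)⁻¹·Aⱼ(t)·(g t) + (g t)⁻¹·g'(t) + Bⱼ(t), and ω̂ᵢⱼ(t) := Âⱼ(t) − Ê(t)⁻¹·Âᵢ(t)·Ê(t) − Ê(t)⁻¹·Ê'(t). If for all t the elements ωᵢⱼ(t), Bᵢ(t), Bⱼ(t), η(t) and η'(t) lie in the center of 𝔸, then for all t: ω̂ᵢⱼ(t) = ωᵢⱼ(t) + Bⱼ(t) − Bᵢ(t) − (η t)⁻¹·η'(t). -/
set_option maxRecDepth 10000

lemma aux {A : Type*} [Ring A] (e f g n : Aˣ) (e' f' g' n' Ai Aj Bi Bj w : A)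
    (hw : w = Aj - ↑e⁻¹ * Ai * ↑e - ↑e⁻¹ * e')
    (cw : ∀ x, w * x = x * w) (cBi : ∀ x, Bi * x = x * Bi) (cBj : ∀ x, Bj * x = x * Bj)
    (cn : ∀ x, (↑n:A) * x = x * ↑n) (cn' : ∀ x, n' * x = x * n') :
    ((↑g⁻¹ * Aj * ↑g + ↑g⁻¹ * g' + Bj)
      - ↑((f⁻¹*e*g*n)⁻¹) * (↑f⁻¹ * Ai * ↑f + ↑f⁻¹ * f' + Bi) * ↑(f⁻¹*e*g*n)
      - ↑((f⁻¹*e*g*n)⁻¹) * ( -(↑f⁻¹ * f' * ↑f⁻¹) * ↑e * ↑g * ↑n + ↑f⁻¹*e'*↑g*↑n + ↑f⁻¹*↑e*g'*↑n + ↑f⁻¹*↑e*↑g*n'))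
    = w + Bj - Bi - ↑n⁻¹ * n' := by
  have hAj : Aj = w + ↑e⁻¹ * Ai * ↑e + ↑e⁻¹ * e' := by rw [hw]; abel
  subst hAj
  simp only [mul_inv_rev, inv_inv, Units.val_mul, mul_add, add_mul, mul_sub, sub_mul,
    mul_neg, neg_mul, mul_assoc, Units.inv_mul_cancel_left, Units.mul_inv_cancel_left]
  have cni : ∀ x : A, ↑n⁻¹ * x = x * ↑n⁻¹ := fun x => by
    calc ↑n⁻¹ * x = ↑n⁻¹ * (x * ↑n * ↑n⁻¹) := by rw [mul_assoc x, Units.mul_inv, mul_one]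
    _ = ↑n⁻¹ * (↑n * x * ↑n⁻¹) := by rw [← cn x]
    _ = ↑n⁻¹ * (↑n * (x * ↑n⁻¹)) := by rw [mul_assoc]
    _ = x * ↑n⁻¹ := by rw [Units.inv_mul_cancel_left]
  have cn2 : ∀ x y : A, x * ((↑n:A) * y) = ↑n * (x * y) := fun x y => by
    rw [← mul_assoc, ← cn x, mul_assoc]
  simp only [cw, cBi, mul_assoc, Units.inv_mul_cancel_left, Units.mul_inv_cancel_left,
    Units.mul_inv, Units.inv_mul, mul_one, one_mul]
  simp only [cn2, ← cn, mul_assoc, Units.inv_mul_cancel_left, Units.mul_inv_cancel_left,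
    Units.mul_inv, Units.inv_mul, mul_one, one_mul]
  abel


/-- Transformation law `A'_ij = A_ij + B_j − B_i − h_ij⁻¹ dh_ij` of the
discrepancy 1-form under an equivalence of twisted principal bundles with
0-connection, evaluated along a path.  Here `e` is the transition function
`e_ij`, `f` and `g` the gauge transformations `e_i, e_j`, `η` the central
1-cochain `h_ij`, `Ai, Aj` the local connection forms, `Bi, Bj` the central
1-forms, `Ehat = f⁻¹ e g η` the gauge-transformed transition function with
derivative `Ehat'` computed by the product and inverse rules, and
`Ahati, Ahatj, omegaHat` the gauge-transformed data. -/
theorem twisted_connection_gauge_transformation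
    {𝔸 : Type*} [NormedRing 𝔸] [NormedAlgebra ℝ 𝔸]
    (e f g η : ℝ → 𝔸ˣ) (e' f' g' η' : ℝ → 𝔸)
    (he : ∀ t, HasDerivAt (fun s => ((e s : 𝔸))) (e' t) t)
    (hf : ∀ t, HasDerivAt (fun s => ((f s : 𝔸))) (f' t) t)
    (hg : ∀ t, HasDerivAt (fun s => ((g s : 𝔸))) (g' t) t)
    (hη : ∀ t, HasDerivAt (fun s => ((η s : 𝔸))) (η' t) t)
    (Ai Aj Bi Bj ωij Ahati Ahatj Ehat' omegaHat : ℝ → 𝔸)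
    (hωij : ∀ t, ωij t =
      Aj t - (((e t)⁻¹ : 𝔸ˣ) : 𝔸) * Ai t * ((e t : 𝔸)) - (((e t)⁻¹ : 𝔸ˣ) : 𝔸) * e' t)
    (hAhati : ∀ t, Ahati t =
      (((f t)⁻¹ : 𝔸ˣ) : 𝔸) * Ai t * ((f t : 𝔸)) + (((f t)⁻¹ : 𝔸ˣ) : 𝔸) * f' t + Bi t)
    (hAhatj : ∀ t, Ahatj t =
      (((g t)⁻¹ : 𝔸ˣ) : 𝔸) * Aj t * ((g t : 𝔸)) + (((g t)⁻¹ : 𝔸ˣ) : 𝔸) * g' t + Bj t)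
    (hEhat' : ∀ t, Ehat' t =
      -((((f t)⁻¹ : 𝔸ˣ) : 𝔸) * f' t * (((f t)⁻¹ : 𝔸ˣ) : 𝔸)) * ((e t : 𝔸)) * ((g t : 𝔸)) * ((η t : 𝔸)) +
        (((f t)⁻¹ : 𝔸ˣ) : 𝔸) * e' t * ((g t : 𝔸)) * ((η t : 𝔸)) +
        (((f t)⁻¹ : 𝔸ˣ) : 𝔸) * ((e t : 𝔸)) * g' t * ((η t : 𝔸)) +
        (((f t)⁻¹ : 𝔸ˣ) : 𝔸) * ((e t : 𝔸)) * ((g t : 𝔸)) * η' t)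
    (homegaHat : ∀ t, omegaHat t =
      Ahatj t - ((((f t)⁻¹ * e t * g t * η t)⁻¹ : 𝔸ˣ) : 𝔸) * Ahati t *
          (((f t)⁻¹ * e t * g t * η t : 𝔸ˣ) : 𝔸) -
        ((((f t)⁻¹ * e t * g t * η t)⁻¹ : 𝔸ˣ) : 𝔸) * Ehat' t)
    (hcen : ∀ t, ωij t ∈ Set.center 𝔸 ∧ Bi t ∈ Set.center 𝔸 ∧
      Bj t ∈ Set.center 𝔸 ∧ ((η t : 𝔸)) ∈ Set.center 𝔸 ∧ η' t ∈ Set.center 𝔸) :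
    ∀ t, omegaHat t = ωij t + Bj t - Bi t - (((η t)⁻¹ : 𝔸ˣ) : 𝔸) * η' t := by
  intro t
  obtain ⟨hw, hBi, hBj, hn, hn'⟩ := hcen t
  rw [homegaHat t, hAhatj t, hAhati t, hEhat' t]
  exact aux (e t) (f t) (g t) (η t) (e' t) (f' t) (g' t) (η' t) (Ai t) (Aj t) (Bi t) (Bj t)
    (ωij t) (hωij t) (fun x => hw.comm x) (fun x => hBi.comm x) (fun x => hBj.comm x)
    (fun x => hn.comm x) (fun x => hn'.comm x)
end

section
/- Let M be a smooth manifold (with corners allowed; modelled on a corner model I over 𝕜 = ℝ) and let γ₁, γ₂ : ℝ → M be smooth maps. Suppose there exists ε > 0 such that γ₁ is constant on the interval [1−ε, ∞), γ₂ is constant on (−∞, ε], and γ₁(1) = γ₂(0). Then the concatenation γ : ℝ → M defined by γ(t) = γ₁(2t) for t ≤ 1/2 and γ(t) = γ₂(2t−1) for t > 1/2 is smooth. -/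
open scoped Manifold

/-- Concatenation of smooth paths that sit at the concatenation point is
smooth: if `γ₁, γ₂ : ℝ → M` are smooth, `γ₁` is constant on `[1−ε, ∞)`, `γ₂`
is constant on `(−∞, ε]` for some `ε > 0`, and `γ₁(1) = γ₂(0)`, then the
concatenation `γ(t) = γ₁(2t)` for `t ≤ 1/2`, `γ(t) = γ₂(2t−1)` for `t > 1/2`,
is smooth. -/
theorem smooth_concatenation_of_sitting
    {E' : Type*} [NormedAddCommGroup E'] [NormedSpace ℝ E']
    {H : Type*} [TopologicalSpace H] (I : ModelWithCorners ℝ E' H)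
    {M : Type*} [TopologicalSpace M] [ChartedSpace H M]
    [IsManifold I (⊤ : ℕ∞) M]
    (γ₁ γ₂ : ℝ → M)
    (h₁ : ContMDiff 𝓘(ℝ, ℝ) I (⊤ : ℕ∞) γ₁) (h₂ : ContMDiff 𝓘(ℝ, ℝ) I (⊤ : ℕ∞) γ₂)
    (hsit : ∃ ε > (0 : ℝ),
      (∀ s ∈ Set.Ici (1 - ε), γ₁ s = γ₁ 1) ∧
      (∀ s ∈ Set.Iic ε, γ₂ s = γ₂ 0) ∧ γ₁ 1 = γ₂ 0) :
    ContMDiff 𝓘(ℝ, ℝ) I (⊤ : ℕ∞)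
      (fun t : ℝ => if t ≤ 1 / 2 then γ₁ (2 * t) else γ₂ (2 * t - 1)) := by
  obtain ⟨ε, hε, hA, hB, hAB⟩ := hsit
  have s1 : ContMDiff 𝓘(ℝ, ℝ) I (⊤ : ℕ∞) (fun t : ℝ => γ₁ (2 * t)) :=
    h₁.comp (contMDiff_const.mul contMDiff_id)
  have s2 : ContMDiff 𝓘(ℝ, ℝ) I (⊤ : ℕ∞) (fun t : ℝ => γ₂ (2 * t - 1)) :=
    h₂.comp ((contMDiff_const.mul contMDiff_id).sub contMDiff_const)
  intro t
  by_cases ht : t < 1 / 2 + ε / 2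
  · refine (s1 t).congr_of_eventuallyEq ?_
    filter_upwards [Iio_mem_nhds ht] with s hs
    by_cases hle : s ≤ 1 / 2
    · rw [if_pos hle]
    · rw [if_neg hle]
      push_neg at hle
      simp only [Set.mem_Iio] at hs
      rw [hB (2 * s - 1) (by simp only [Set.mem_Iic]; linarith),
        ← hAB, hA (2 * s) (by simp only [Set.mem_Ici]; linarith)]
  · push_neg at ht
    refine (s2 t).congr_of_eventuallyEq ?_
    filter_upwards [Ioi_mem_nhds (show (1 : ℝ) / 2 - ε / 2 < t by linarith)] with s hs
    by_cases hle : s ≤ 1 / 2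
    · rw [if_pos hle]
      simp only [Set.mem_Ioi] at hs
      rw [hA (2 * s) (by simp only [Set.mem_Ici]; linarith), hAB,
        ← hB (2 * s - 1) (by simp only [Set.mem_Iic]; linarith)]
    · rw [if_neg hle]
end
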